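/- arXiv:1503.07358 — 3 statements merged into one kernel-verified Lean document; each statement's English description precedes it below -/
import Mathlib

section
/- The symmetric block matrix Q = [[K^ω (K^V)^{-1}(K^ω + K^droop), -K^ω], [-K^ω, K^V]] is positive definite, where K^ω, K^V, K^droop are diagonal matrices with positive diagonal entries. -/
open Matrix

lemma posDef_fromBlocks₂₂_aux {m n : Type*} [Fintype m] [Fintype n] [DecidableEq n]
    (A : Matrix m m ℝ) (B : Matrix m n ℝ) {D : Matrix n n ℝ} (hD : D.PosDef)
    [Invertible D] (hS : (A - B * D⁻¹ * Bᴴ).PosDef) :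
    (Matrix.fromBlocks A B Bᴴ D).PosDef := by
  rw [posDef_iff_dotProduct_mulVec]
  constructor
  · exact (Matrix.IsHermitian.fromBlocks₂₂ A B hD.1).mpr hS.1
  · intro z hz
    rw [← Sum.elim_comp_inl_inr z, dotProduct_mulVec,
      schur_complement_eq₂₂ A B _ _ hD.1]
    by_cases hx : z ∘ Sum.inl = 0
    · have hy : z ∘ Sum.inr ≠ 0 := by
        intro hy
        apply hz
        ext (i | i)
        · exact congrFun hx i
        · exact congrFun hy i
      have h1 : (0:ℝ) < star ((D⁻¹ * Bᴴ) *ᵥ (z ∘ Sum.inl) + z ∘ Sum.inr) ᵥ* D ⬝ᵥ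
          ((D⁻¹ * Bᴴ) *ᵥ (z ∘ Sum.inl) + z ∘ Sum.inr) := by
        rw [← dotProduct_mulVec]
        apply hD.dotProduct_mulVec_pos
        simpa [hx] using hy
      have h2 : (0:ℝ) ≤ star (z ∘ Sum.inl) ᵥ* (A - B * D⁻¹ * Bᴴ) ⬝ᵥ (z ∘ Sum.inl) := by
        rw [← dotProduct_mulVec]
        exact hS.posSemidef.dotProduct_mulVec_nonneg _
      linarith
    · have h1 : (0:ℝ) ≤ star ((D⁻¹ * Bᴴ) *ᵥ (z ∘ Sum.inl) + z ∘ Sum.inr) ᵥ* D ⬝ᵥ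
          ((D⁻¹ * Bᴴ) *ᵥ (z ∘ Sum.inl) + z ∘ Sum.inr) := by
        rw [← dotProduct_mulVec]
        exact hD.posSemidef.dotProduct_mulVec_nonneg _
      have h2 : (0:ℝ) < star (z ∘ Sum.inl) ᵥ* (A - B * D⁻¹ * Bᴴ) ⬝ᵥ (z ∘ Sum.inl) := by
        rw [← dotProduct_mulVec]
        exact hS.dotProduct_mulVec_pos hx
      linarith

/-- The symmetric block matrix
`Q = [[K^ω (K^V)⁻¹ (K^ω + K^droop), -K^ω], [-K^ω, K^V]]`
is positive definite, where `K^ω, K^V, K^droop` are diagonal matrices with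
positive diagonal entries. -/
theorem blockQ_posDef {n : ℕ} (kw kV kd : Fin n → ℝ)
    (hkw : ∀ i, 0 < kw i) (hkV : ∀ i, 0 < kV i) (hkd : ∀ i, 0 < kd i)
    (Kw KV Kd : Matrix (Fin n) (Fin n) ℝ)
    (hKw : Kw = Matrix.diagonal kw) (hKV : KV = Matrix.diagonal kV)
    (hKd : Kd = Matrix.diagonal kd) :
    (Matrix.fromBlocks (Kw * KV⁻¹ * (Kw + Kd)) (-Kw) (-Kw) KV).PosDef := by
  subst hKw hKV hKd
  have hKVinv : (Matrix.diagonal kV)⁻¹ = Matrix.diagonal (fun i => (kV i)⁻¹) := by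
    apply Matrix.inv_eq_right_inv
    rw [Matrix.diagonal_mul_diagonal]
    convert Matrix.diagonal_one with i
    exact mul_inv_cancel₀ (hkV i).ne'
  have hKVpd : (Matrix.diagonal kV).PosDef := Matrix.posDef_diagonal_iff.mpr hkV
  haveI : Invertible (Matrix.diagonal kV) := by
    apply Matrix.invertibleOfIsUnitDet
    rw [Matrix.det_diagonal]
    exact isUnit_iff_ne_zero.mpr (Finset.prod_ne_zero_iff.mpr fun i _ => (hkV i).ne')
  have hBH : (-(Matrix.diagonal kw))ᴴ = -(Matrix.diagonal kw) := by
    simp [Matrix.conjTranspose, Matrix.diagonal_transpose]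
  suffices h : (Matrix.fromBlocks
      (Matrix.diagonal kw * (Matrix.diagonal kV)⁻¹ * (Matrix.diagonal kw + Matrix.diagonal kd))
      (-(Matrix.diagonal kw)) (-(Matrix.diagonal kw))ᴴ (Matrix.diagonal kV)).PosDef by
    rwa [hBH] at h
  apply posDef_fromBlocks₂₂_aux _ _ hKVpd
  have : Matrix.diagonal kw * (Matrix.diagonal kV)⁻¹ * (Matrix.diagonal kw + Matrix.diagonal kd)
      - -(Matrix.diagonal kw) * (Matrix.diagonal kV)⁻¹ * (-(Matrix.diagonal kw))ᴴ
      = Matrix.diagonal (fun i => kw i * (kV i)⁻¹ * kd i) := by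
    rw [hBH, hKVinv]
    simp [Matrix.diagonal_mul_diagonal, Matrix.diagonal_add]
    exact fun i => by ring
  rw [this]
  exact Matrix.posDef_diagonal_iff.mpr fun i =>
    mul_pos (mul_pos (hkw i) (inv_pos.mpr (hkV i))) (hkd i)
end

section
/- Let Q1 be the positive definite 2n×2n matrix [[K^ω (K^V)^{-1}(K^ω + K^droop), -K^ω], [-K^ω, V^nom·L_R + K^V]] where L_R is a graph Laplacian with positive edge weights and V^nom > 0. Then for every vector (ω, V) ∈ ℝ^{2n}, the quadratic form satisfies ω^T K^ω(K^V)^{-1}(K^ω+K^droop) ω - 2 ω^T K^ω V + V^T(V^nom·L_R + K^V) V ≥ 0, with equality iff ω = 0 and V = 0. -/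
open Matrix

/-- With `K^ω, K^V, K^droop` positive diagonal, `L_R` the Laplacian of a
connected weighted graph and `V^nom > 0`, the quadratic form of
`Q1 = [[K^ω(K^V)⁻¹(K^ω+K^droop), -K^ω], [-K^ω, V^nom·L_R + K^V]]` satisfies
`ωᵀ K^ω(K^V)⁻¹(K^ω+K^droop) ω - 2 ωᵀ K^ω V + Vᵀ(V^nom·L_R + K^V) V ≥ 0`,
with equality iff `ω = 0` and `V = 0`. -/
theorem Q1_quadform_nonneg {n : ℕ} (kw kV kd : Fin n → ℝ)
    (hkw : ∀ i, 0 < kw i) (hkV : ∀ i, 0 < kV i) (hkd : ∀ i, 0 < kd i)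
    (Kw KV Kd : Matrix (Fin n) (Fin n) ℝ)
    (hKw : Kw = Matrix.diagonal kw) (hKV : KV = Matrix.diagonal kV)
    (hKd : Kd = Matrix.diagonal kd)
    (w : Fin n → Fin n → ℝ)
    (hw_symm : ∀ i j, w i j = w j i) (hw_nonneg : ∀ i j, 0 ≤ w i j)
    (hw_diag : ∀ i, w i i = 0)
    (hconn : ∀ i j : Fin n, Relation.ReflTransGen (fun a b => 0 < w a b) i j)
    (LR : Matrix (Fin n) (Fin n) ℝ)
    (hLR : LR = Matrix.of fun i j => if i = j then ∑ k, w i k else -(w i j))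
    (Vnom : ℝ) (hVnom : 0 < Vnom) (ω V : Fin n → ℝ) :
    0 ≤ ω ⬝ᵥ ((Kw * KV⁻¹ * (Kw + Kd)) *ᵥ ω) - 2 * (ω ⬝ᵥ (Kw *ᵥ V))
        + V ⬝ᵥ ((Vnom • LR + KV) *ᵥ V) ∧
      (ω ⬝ᵥ ((Kw * KV⁻¹ * (Kw + Kd)) *ᵥ ω) - 2 * (ω ⬝ᵥ (Kw *ᵥ V))
        + V ⬝ᵥ ((Vnom • LR + KV) *ᵥ V) = 0 ↔ ω = 0 ∧ V = 0) := by
  -- KV inverse is the diagonal of pointwise inverses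
  have hKVinv : KV⁻¹ = Matrix.diagonal (fun i => (kV i)⁻¹) := by
    rw [hKV]
    apply Matrix.inv_eq_right_inv
    rw [Matrix.diagonal_mul_diagonal]
    have : (fun i => kV i * (kV i)⁻¹) = fun _ : Fin n => (1:ℝ) :=
      funext fun i => mul_inv_cancel₀ (hkV i).ne'
    rw [this]
    exact Matrix.diagonal_one
  set f : Fin n → ℝ := fun i =>
    kw i * (kV i)⁻¹ * (kw i + kd i) * ω i ^ 2 - 2 * (kw i * ω i * V i)
      + kV i * V i ^ 2 with hf
  -- Laplacian quadratic form
  have hq1 : V ⬝ᵥ LR *ᵥ V = ∑ i, ∑ j, (w i j * (V i * V i) - w i j * (V i * V j)) := by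
    subst hLR
    simp only [dotProduct, mulVec, dotProduct, Matrix.of_apply]
    refine Finset.sum_congr rfl fun i _ => ?_
    have : ∀ j, (if i = j then ∑ k, w i k else -(w i j)) * V j
        = (if i = j then (∑ k, w i k) * V j else 0) - w i j * V j := by
      intro j
      by_cases h : i = j
      · subst h; simp [hw_diag i]
      · simp [h]
    rw [Finset.sum_congr rfl fun j _ => this j, Finset.sum_sub_distrib,
      Finset.sum_ite_eq Finset.univ i (fun j => (∑ k, w i k) * V j)]
    simp only [Finset.mem_univ, if_true]
    rw [Finset.sum_mul, mul_sub, Finset.mul_sum, Finset.mul_sum, ← Finset.sum_sub_distrib]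
    exact Finset.sum_congr rfl fun j _ => by ring
  have hsw : (∑ i, ∑ j, (w i j * (V i * V i) - w i j * (V i * V j)))
      = ∑ i, ∑ j, (w i j * (V j * V j) - w i j * (V j * V i)) := by
    rw [Finset.sum_comm]
    exact Finset.sum_congr rfl fun i _ => Finset.sum_congr rfl fun j _ => by
      rw [hw_symm i j]
  have hq : V ⬝ᵥ LR *ᵥ V = (1/2) * ∑ i, ∑ j, w i j * (V i - V j) ^ 2 := by
    have h2 : (2:ℝ) * (V ⬝ᵥ LR *ᵥ V) = ∑ i, ∑ j, w i j * (V i - V j) ^ 2 := by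
      calc (2:ℝ) * (V ⬝ᵥ LR *ᵥ V)
          = (∑ i, ∑ j, (w i j * (V i * V i) - w i j * (V i * V j)))
            + ∑ i, ∑ j, (w i j * (V j * V j) - w i j * (V j * V i)) := by
            rw [← hsw, hq1]; ring
        _ = ∑ i, ∑ j, w i j * (V i - V j) ^ 2 := by
            rw [← Finset.sum_add_distrib]
            refine Finset.sum_congr rfl fun i _ => ?_
            rw [← Finset.sum_add_distrib]
            exact Finset.sum_congr rfl fun j _ => by ring
    linarith
  have hqnn : 0 ≤ V ⬝ᵥ LR *ᵥ V := by
    rw [hq]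
    have : 0 ≤ ∑ i, ∑ j, w i j * (V i - V j) ^ 2 :=
      Finset.sum_nonneg fun i _ => Finset.sum_nonneg fun j _ =>
        mul_nonneg (hw_nonneg i j) (sq_nonneg _)
    linarith
  -- main decomposition
  have key : ω ⬝ᵥ ((Kw * KV⁻¹ * (Kw + Kd)) *ᵥ ω) - 2 * (ω ⬝ᵥ (Kw *ᵥ V))
        + V ⬝ᵥ ((Vnom • LR + KV) *ᵥ V)
      = (∑ i, f i) + Vnom * (V ⬝ᵥ LR *ᵥ V) := by
    rw [hKVinv, hKw, hKd, hKV, Matrix.diagonal_mul_diagonal, Matrix.diagonal_add,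
      Matrix.diagonal_mul_diagonal, Matrix.add_mulVec, Matrix.smul_mulVec,
      dotProduct_add, dotProduct_smul]
    simp only [dotProduct, mulVec_diagonal, smul_eq_mul, Pi.add_apply, Pi.mul_apply]
    have hsum : ∑ i, f i = ∑ x : Fin n, ω x * (kw x * (kV x)⁻¹ * (kw x + kd x) * ω x)
        - 2 * ∑ x : Fin n, ω x * (kw x * V x) + ∑ x : Fin n, V x * (kV x * V x) := by
      rw [Finset.mul_sum, ← Finset.sum_sub_distrib, ← Finset.sum_add_distrib]
      exact Finset.sum_congr rfl fun i _ => by simp only [hf]; ring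
    rw [hsum]; ring
  -- per-index facts
  have hfid : ∀ i, f i = (kV i)⁻¹ * ((kV i * V i - kw i * ω i) ^ 2 + kw i * kd i * ω i ^ 2) := by
    intro i
    have hne := (hkV i).ne'
    simp only [hf]
    field_simp
    ring
  have hfnn : ∀ i, 0 ≤ f i := by
    intro i
    rw [hfid i]
    exact mul_nonneg (inv_nonneg.mpr (hkV i).le)
      (add_nonneg (sq_nonneg _) (mul_nonneg (mul_pos (hkw i) (hkd i)).le (sq_nonneg _)))
  have hfzero : ∀ i, f i = 0 → ω i = 0 ∧ V i = 0 := by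
    intro i h0
    rw [hfid i] at h0
    have h1 : (kV i * V i - kw i * ω i) ^ 2 + kw i * kd i * ω i ^ 2 = 0 := by
      have := (hkV i).ne'
      field_simp at h0
      linear_combination h0
    have h2 : (kV i * V i - kw i * ω i) ^ 2 = 0 ∧ kw i * kd i * ω i ^ 2 = 0 := by
      constructor <;> nlinarith [sq_nonneg (kV i * V i - kw i * ω i), sq_nonneg (ω i),
        mul_pos (hkw i) (hkd i), mul_nonneg (mul_pos (hkw i) (hkd i)).le (sq_nonneg (ω i))]
    have hω : ω i = 0 := by
      have hp := mul_pos (hkw i) (hkd i)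
      have hsq : ω i ^ 2 = 0 := by
        rcases mul_eq_zero.mp h2.2 with h | h
        · exact absurd h hp.ne'
        · exact h
      exact sq_eq_zero_iff.mp hsq
    refine ⟨hω, ?_⟩
    have h3 : kV i * V i - kw i * ω i = 0 := sq_eq_zero_iff.mp h2.1
    rw [hω] at h3
    have h4 : kV i * V i = 0 := by linarith [h3]
    rcases mul_eq_zero.mp h4 with h | h
    · exact absurd h (hkV i).ne'
    · exact h
  constructor
  · rw [key]
    have : 0 ≤ ∑ i, f i := Finset.sum_nonneg fun i _ => hfnn i
    nlinarith [mul_nonneg hVnom.le hqnn]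
  · constructor
    · intro h0
      rw [key] at h0
      have hs : ∑ i, f i = 0 := by nlinarith [Finset.sum_nonneg (fun i _ => hfnn i : ∀ i ∈ Finset.univ, 0 ≤ f i), mul_nonneg hVnom.le hqnn]
      have hz : ∀ i ∈ Finset.univ, f i = 0 :=
        (Finset.sum_eq_zero_iff_of_nonneg fun i _ => hfnn i).mp hs
      constructor <;> funext i
      · exact (hfzero i (hz i (Finset.mem_univ i))).1
      · exact (hfzero i (hz i (Finset.mem_univ i))).2
    · rintro ⟨rfl, rfl⟩
      rw [key]
      simp [hf, Matrix.mulVec_zero]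
end

section
/- For the distributed secondary controller system ẋ = A x with x = (ω, V, η) ∈ ℝ^{3n}, the time derivative of W(ω,V,η) = (1/2)ω^T K^ω (K^V)^{-1} M^{-1} ω + (V^nom/2) V^T C V + (1/2)η^T η along trajectories equals -[ω;V]^T Q1 [ω;V] - δ η^T L_c η, which is nonpositive, and vanishes only when ω = 0, V = 0 and η is a multiple of the all-ones vector. -/
open Matrix

private theorem diag_inv' {n : ℕ} (d : Fin n → ℝ) (hd : ∀ i, d i ≠ 0) :
    (Matrix.diagonal d)⁻¹ = Matrix.diagonal (fun i => (d i)⁻¹) := by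
  apply Matrix.inv_eq_right_inv
  rw [Matrix.diagonal_mul_diagonal]
  simp [mul_inv_cancel₀, hd, Matrix.diagonal_one]

private theorem lap_mulVec' {n : ℕ} (w : Fin n → Fin n → ℝ) (hdiag : ∀ i, w i i = 0)
    (x : Fin n → ℝ) (i : Fin n) :
    ((Matrix.of fun i j => if i = j then ∑ k, w i k else -(w i j)) *ᵥ x) i
      = ∑ j, w i j * (x i - x j) := by
  simp only [Matrix.mulVec, dotProduct, Matrix.of_apply]
  have h1 : ∀ j, (if i = j then ∑ k, w i k else -(w i j)) * x j
      = (if i = j then (∑ k, w i k) * x j else 0) - w i j * x j := by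
    intro j
    by_cases h : i = j
    · subst h; simp [hdiag]
    · simp [h]
  rw [Finset.sum_congr rfl (fun j _ => h1 j), Finset.sum_sub_distrib,
    Finset.sum_ite_eq Finset.univ i (fun j => (∑ k, w i k) * x j)]
  simp [Finset.sum_mul, mul_sub, Finset.sum_sub_distrib]

private theorem lap_quad' {n : ℕ} (w : Fin n → Fin n → ℝ) (hsymm : ∀ i j, w i j = w j i)
    (hdiag : ∀ i, w i i = 0) (x : Fin n → ℝ) :
    x ⬝ᵥ ((Matrix.of fun i j => if i = j then ∑ k, w i k else -(w i j)) *ᵥ x)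
      = (1/2) * ∑ i, ∑ j, w i j * (x i - x j)^2 := by
  have hA : x ⬝ᵥ ((Matrix.of fun i j => if i = j then ∑ k, w i k else -(w i j)) *ᵥ x)
      = ∑ i, ∑ j, w i j * (x i * (x i - x j)) := by
    simp only [dotProduct, lap_mulVec' w hdiag, Finset.mul_sum]
    exact Finset.sum_congr rfl fun i _ => Finset.sum_congr rfl fun j _ => by ring
  have h2 : ∑ i, ∑ j, w i j * (x i * (x i - x j))
      = ∑ i, ∑ j, w i j * (x j * (x j - x i)) := by
    rw [Finset.sum_comm]
    exact Finset.sum_congr rfl fun i _ => Finset.sum_congr rfl fun j _ => by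
      rw [hsymm j i]
  have h3 : (2:ℝ) * ∑ i, ∑ j, w i j * (x i * (x i - x j))
      = ∑ i, ∑ j, w i j * (x i - x j)^2 := by
    rw [two_mul]
    nth_rewrite 2 [h2]
    rw [← Finset.sum_add_distrib]
    refine Finset.sum_congr rfl fun i _ => ?_
    rw [← Finset.sum_add_distrib]
    exact Finset.sum_congr rfl fun j _ => by ring
  rw [hA]; linarith

private theorem rearr' (S1 S2 S3 SR X Y : ℝ) (h : S1 - 2*S2 + S3 = SR) :
    S1 - 2*S2 + (X + S3) + Y = SR + X + Y := by linarith

set_option maxHeartbeats 2000000 in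
theorem distributed_secondary_lyapunov_derivative {n : ℕ} (hn : 0 < n)
    (m c kw kV kd kdI : Fin n → ℝ)
    (hm : ∀ i, 0 < m i) (hc : ∀ i, 0 < c i)
    (hkw : ∀ i, 0 < kw i) (hkV : ∀ i, 0 < kV i) (hkd : ∀ i, 0 < kd i)
    (hkdI : ∀ i, 0 < kdI i)
    (M C E Kw KV Kd KdI : Matrix (Fin n) (Fin n) ℝ)
    (hM : M = Matrix.diagonal fun i => (m i)⁻¹)
    (hC : C = Matrix.diagonal c)
    (hE : E = Matrix.diagonal fun i => (c i)⁻¹)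
    (hKw : Kw = Matrix.diagonal kw) (hKV : KV = Matrix.diagonal kV)
    (hKd : Kd = Matrix.diagonal kd) (hKdI : KdI = Matrix.diagonal kdI)
    -- connected weighted Laplacian L_R
    (w : Fin n → Fin n → ℝ)
    (hw_symm : ∀ i j, w i j = w j i) (hw_nonneg : ∀ i j, 0 ≤ w i j)
    (hw_diag : ∀ i, w i i = 0)
    (hconn : ∀ i j : Fin n, Relation.ReflTransGen (fun a b => 0 < w a b) i j)
    (LR : Matrix (Fin n) (Fin n) ℝ)
    (hLR : LR = Matrix.of fun i j => if i = j then ∑ k, w i k else -(w i j))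
    -- connected communication Laplacian L_c with symmetric positive weights
    (cw : Fin n → Fin n → ℝ)
    (hcw_symm : ∀ i j, cw i j = cw j i) (hcw_nonneg : ∀ i j, 0 ≤ cw i j)
    (hcw_diag : ∀ i, cw i i = 0)
    (hcconn : ∀ i j : Fin n, Relation.ReflTransGen (fun a b => 0 < cw a b) i j)
    (Lc : Matrix (Fin n) (Fin n) ℝ)
    (hLc : Lc = Matrix.of fun i j => if i = j then ∑ k, cw i k else -(cw i j))
    (Vnom δ : ℝ) (hVnom : 0 < Vnom) (hδ : 0 < δ)
    -- the closed-loop vector field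
    (f : (Fin n → ℝ) × (Fin n → ℝ) × (Fin n → ℝ) →
      (Fin n → ℝ) × (Fin n → ℝ) × (Fin n → ℝ))
    (hf : f = fun p =>
      (M *ᵥ (-((Kw + Kd) *ᵥ p.1) + KV *ᵥ p.2.1 - (KV * Kw⁻¹ * KdI) *ᵥ p.2.2),
       E *ᵥ (Vnom⁻¹ • (Kw *ᵥ p.1) - (LR + Vnom⁻¹ • KV) *ᵥ p.2.1),
       KdI *ᵥ p.1 - δ • (Lc *ᵥ p.2.2)))
    -- the Lyapunov function
    (W : (Fin n → ℝ) × (Fin n → ℝ) × (Fin n → ℝ) → ℝ)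
    (hW : W = fun p => (1/2) * (p.1 ⬝ᵥ ((Kw * KV⁻¹ * M⁻¹) *ᵥ p.1))
        + (Vnom / 2) * (p.2.1 ⬝ᵥ (C *ᵥ p.2.1)) + (1/2) * (p.2.2 ⬝ᵥ p.2.2))
    -- the dissipation rate `[ω;V]ᵀ Q1 [ω;V] + δ ηᵀ L_c η`
    (Qf : (Fin n → ℝ) × (Fin n → ℝ) × (Fin n → ℝ) → ℝ)
    (hQf : Qf = fun p => p.1 ⬝ᵥ ((Kw * KV⁻¹ * (Kw + Kd)) *ᵥ p.1)
        - 2 * (p.1 ⬝ᵥ (Kw *ᵥ p.2.1))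
        + p.2.1 ⬝ᵥ ((Vnom • LR + KV) *ᵥ p.2.1) + δ * (p.2.2 ⬝ᵥ (Lc *ᵥ p.2.2))) :
    (∀ x : ℝ → (Fin n → ℝ) × (Fin n → ℝ) × (Fin n → ℝ),
      (∀ t, HasDerivAt x (f (x t)) t) →
        ∀ t, HasDerivAt (fun s => W (x s)) (-(Qf (x t))) t) ∧
    (∀ p, -(Qf p) ≤ 0) ∧
    (∀ p, -(Qf p) = 0 ↔ p.1 = 0 ∧ p.2.1 = 0 ∧ ∃ k : ℝ, p.2.2 = fun _ => k) := by
  have hkwne : ∀ i, kw i ≠ 0 := fun i => (hkw i).ne'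
  have hkVne : ∀ i, kV i ≠ 0 := fun i => (hkV i).ne'
  have hmne : ∀ i, m i ≠ 0 := fun i => (hm i).ne'
  have hcne : ∀ i, c i ≠ 0 := fun i => (hc i).ne'
  have hbpos : ∀ i, 0 < kw i * (kV i)⁻¹ * kd i := fun i =>
    mul_pos (mul_pos (hkw i) (inv_pos.2 (hkV i))) (hkd i)
  have hKVinv : KV⁻¹ = Matrix.diagonal (fun i => (kV i)⁻¹) := by
    rw [hKV]; exact diag_inv' kV hkVne
  have hKwinv : Kw⁻¹ = Matrix.diagonal (fun i => (kw i)⁻¹) := by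
    rw [hKw]; exact diag_inv' kw hkwne
  have hMinv : M⁻¹ = Matrix.diagonal m := by
    rw [hM, diag_inv' _ (fun i => inv_ne_zero (hmne i))]
    simp
  -- key decomposition of Qf
  have hQ : ∀ p : (Fin n → ℝ) × (Fin n → ℝ) × (Fin n → ℝ),
      Qf p = (∑ i, (kV i * (kw i * (kV i)⁻¹ * p.1 i - p.2.1 i)^2
            + kw i * (kV i)⁻¹ * kd i * (p.1 i)^2))
        + Vnom * ((1/2) * ∑ i, ∑ j, w i j * (p.2.1 i - p.2.1 j)^2)
        + δ * ((1/2) * ∑ i, ∑ j, cw i j * (p.2.2 i - p.2.2 j)^2) := by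
    intro p
    rw [hQf]
    simp only
    rw [hKVinv, hKw, hKV, hKd, hLR, hLc]
    rw [Matrix.diagonal_mul_diagonal, Matrix.diagonal_add, Matrix.diagonal_mul_diagonal,
      Matrix.add_mulVec, Matrix.smul_mulVec, dotProduct_add,
      dotProduct_smul, lap_quad' w hw_symm hw_diag,
      lap_quad' cw hcw_symm hcw_diag, smul_eq_mul]
    refine rearr' _ _ _ _ _ _ ?_
    simp only [dotProduct, Matrix.mulVec_diagonal, Finset.mul_sum]
    rw [← Finset.sum_sub_distrib, ← Finset.sum_add_distrib]
    refine Finset.sum_congr rfl fun i _ => ?_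
    have h1 := hkVne i
    field_simp
    ring
  -- nonnegativity facts
  have hS1 : ∀ p : (Fin n → ℝ) × (Fin n → ℝ) × (Fin n → ℝ),
      (0:ℝ) ≤ ∑ i, (kV i * (kw i * (kV i)⁻¹ * p.1 i - p.2.1 i)^2
        + kw i * (kV i)⁻¹ * kd i * (p.1 i)^2) := fun p =>
    Finset.sum_nonneg fun i _ => add_nonneg
      (mul_nonneg (hkV i).le (sq_nonneg _))
      (mul_nonneg (hbpos i).le (sq_nonneg _))
  have hS2 : ∀ p : (Fin n → ℝ) × (Fin n → ℝ) × (Fin n → ℝ),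
      (0:ℝ) ≤ ∑ i, ∑ j, w i j * (p.2.1 i - p.2.1 j)^2 := fun p =>
    Finset.sum_nonneg fun i _ => Finset.sum_nonneg fun j _ =>
      mul_nonneg (hw_nonneg i j) (sq_nonneg _)
  have hS3 : ∀ p : (Fin n → ℝ) × (Fin n → ℝ) × (Fin n → ℝ),
      (0:ℝ) ≤ ∑ i, ∑ j, cw i j * (p.2.2 i - p.2.2 j)^2 := fun p =>
    Finset.sum_nonneg fun i _ => Finset.sum_nonneg fun j _ =>
      mul_nonneg (hcw_nonneg i j) (sq_nonneg _)
  have hT2 : ∀ p : (Fin n → ℝ) × (Fin n → ℝ) × (Fin n → ℝ),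
      (0:ℝ) ≤ Vnom * ((1/2) * ∑ i, ∑ j, w i j * (p.2.1 i - p.2.1 j)^2) := fun p =>
    mul_nonneg hVnom.le (by linarith [hS2 p])
  have hT3 : ∀ p : (Fin n → ℝ) × (Fin n → ℝ) × (Fin n → ℝ),
      (0:ℝ) ≤ δ * ((1/2) * ∑ i, ∑ j, cw i j * (p.2.2 i - p.2.2 j)^2) := fun p =>
    mul_nonneg hδ.le (by linarith [hS3 p])
  refine ⟨?_, ?_, ?_⟩
  · -- derivative along trajectories
    intro x hx t
    have hx1 : ∀ i, HasDerivAt (fun s => (x s).1 i) ((f (x t)).1 i) t := fun i =>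
      (((ContinuousLinearMap.proj i).comp
        (ContinuousLinearMap.fst ℝ (Fin n → ℝ)
          ((Fin n → ℝ) × (Fin n → ℝ)))).hasFDerivAt.comp_hasDerivAt t (hx t))
    have hx2 : ∀ i, HasDerivAt (fun s => (x s).2.1 i) ((f (x t)).2.1 i) t := fun i =>
      (((ContinuousLinearMap.proj i).comp
        ((ContinuousLinearMap.fst ℝ (Fin n → ℝ) (Fin n → ℝ)).comp
          (ContinuousLinearMap.snd ℝ (Fin n → ℝ)
            ((Fin n → ℝ) × (Fin n → ℝ))))).hasFDerivAt.comp_hasDerivAt t (hx t))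
    have hx3 : ∀ i, HasDerivAt (fun s => (x s).2.2 i) ((f (x t)).2.2 i) t := fun i =>
      (((ContinuousLinearMap.proj i).comp
        ((ContinuousLinearMap.snd ℝ (Fin n → ℝ) (Fin n → ℝ)).comp
          (ContinuousLinearMap.snd ℝ (Fin n → ℝ)
            ((Fin n → ℝ) × (Fin n → ℝ))))).hasFDerivAt.comp_hasDerivAt t (hx t))
    have hWx : (fun s => W (x s)) = fun s =>
        ∑ i, ((1/2) * (kw i * (kV i)⁻¹ * m i) * ((x s).1 i * (x s).1 i)
          + (Vnom/2) * c i * ((x s).2.1 i * (x s).2.1 i)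
          + (1/2) * ((x s).2.2 i * (x s).2.2 i)) := by
      funext s
      rw [hW]
      simp only
      rw [hKVinv, hMinv, hKw, hC, Matrix.diagonal_mul_diagonal,
        Matrix.diagonal_mul_diagonal]
      simp only [dotProduct, Matrix.mulVec_diagonal]
      rw [Finset.mul_sum, Finset.mul_sum, Finset.mul_sum, ← Finset.sum_add_distrib,
        ← Finset.sum_add_distrib]
      exact Finset.sum_congr rfl fun i _ => by ring
    have Total : HasDerivAt (fun s =>
        ∑ i, ((1/2) * (kw i * (kV i)⁻¹ * m i) * ((x s).1 i * (x s).1 i)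
          + (Vnom/2) * c i * ((x s).2.1 i * (x s).2.1 i)
          + (1/2) * ((x s).2.2 i * (x s).2.2 i)))
        (∑ i, ((1/2) * (kw i * (kV i)⁻¹ * m i)
            * ((f (x t)).1 i * (x t).1 i + (x t).1 i * (f (x t)).1 i)
          + (Vnom/2) * c i
            * ((f (x t)).2.1 i * (x t).2.1 i + (x t).2.1 i * (f (x t)).2.1 i)
          + (1/2) * ((f (x t)).2.2 i * (x t).2.2 i + (x t).2.2 i * (f (x t)).2.2 i))) t := by
      apply HasDerivAt.fun_sum
      intro i _
      exact ((((hx1 i).mul (hx1 i)).const_mul ((1/2) * (kw i * (kV i)⁻¹ * m i))).add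
        (((hx2 i).mul (hx2 i)).const_mul ((Vnom/2) * c i))).add
        (((hx3 i).mul (hx3 i)).const_mul (1/2))
    have key : (∑ i, ((1/2) * (kw i * (kV i)⁻¹ * m i)
            * ((f (x t)).1 i * (x t).1 i + (x t).1 i * (f (x t)).1 i)
          + (Vnom/2) * c i
            * ((f (x t)).2.1 i * (x t).2.1 i + (x t).2.1 i * (f (x t)).2.1 i)
          + (1/2) * ((f (x t)).2.2 i * (x t).2.2 i + (x t).2.2 i * (f (x t)).2.2 i)))
        = -(Qf (x t)) := by
      rw [hf, hQf]
      simp only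
      rw [hKVinv, hKwinv, hKw, hKV, hKd, hKdI, hM, hE]
      simp only [Matrix.diagonal_mul_diagonal, Matrix.diagonal_add, Matrix.add_mulVec,
        Matrix.smul_mulVec]
      simp only [dotProduct, Matrix.mulVec_diagonal, Pi.add_apply, Pi.sub_apply,
        Pi.neg_apply, Pi.smul_apply, smul_eq_mul, Finset.mul_sum]
      rw [← Finset.sum_sub_distrib, ← Finset.sum_add_distrib, ← Finset.sum_add_distrib,
        ← Finset.sum_neg_distrib]
      refine Finset.sum_congr rfl fun i _ => ?_
      have h1 := hkwne i
      have h2 := hkVne i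
      have h3 := hmne i
      have h4 := hcne i
      have h5 := hVnom.ne'
      field_simp
      ring
    rw [hWx]
    exact key ▸ Total
  · -- nonpositivity
    intro p
    rw [neg_nonpos, hQ]
    linarith [hS1 p, hT2 p, hT3 p]
  · -- characterization of the kernel
    intro p
    constructor
    · intro h0
      rw [neg_eq_zero, hQ p] at h0
      have hS : (∑ i, (kV i * (kw i * (kV i)⁻¹ * p.1 i - p.2.1 i)^2
          + kw i * (kV i)⁻¹ * kd i * (p.1 i)^2)) = 0 := by
        linarith [hS1 p, hT2 p, hT3 p]
      have hd3 : δ * ((1/2) * ∑ i, ∑ j, cw i j * (p.2.2 i - p.2.2 j)^2) = 0 := by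
        linarith [hS1 p, hT2 p, hT3 p]
      have hQ3 : (∑ i, ∑ j, cw i j * (p.2.2 i - p.2.2 j)^2) = 0 := by
        rcases mul_eq_zero.1 hd3 with h | h
        · exact absurd h hδ.ne'
        · linarith
      have hterm : ∀ i ∈ Finset.univ, (kV i * (kw i * (kV i)⁻¹ * p.1 i - p.2.1 i)^2
          + kw i * (kV i)⁻¹ * kd i * (p.1 i)^2) = 0 :=
        (Finset.sum_eq_zero_iff_of_nonneg (fun i _ => add_nonneg
          (mul_nonneg (hkV i).le (sq_nonneg _))
          (mul_nonneg (hbpos i).le (sq_nonneg _)))).1 hS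
      have hzeros : ∀ i, p.1 i = 0 ∧ p.2.1 i = 0 := by
        intro i
        have ht := hterm i (Finset.mem_univ i)
        have t1nn : (0:ℝ) ≤ kV i * (kw i * (kV i)⁻¹ * p.1 i - p.2.1 i)^2 :=
          mul_nonneg (hkV i).le (sq_nonneg _)
        have t2nn : (0:ℝ) ≤ kw i * (kV i)⁻¹ * kd i * (p.1 i)^2 :=
          mul_nonneg (hbpos i).le (sq_nonneg _)
        have t2z : kw i * (kV i)⁻¹ * kd i * (p.1 i)^2 = 0 := by linarith
        have hω : p.1 i = 0 := by
          rcases mul_eq_zero.1 t2z with h | h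
          · exact absurd h (hbpos i).ne'
          · exact sq_eq_zero_iff.1 h
        have t1z : kV i * (kw i * (kV i)⁻¹ * p.1 i - p.2.1 i)^2 = 0 := by linarith
        have hq : kw i * (kV i)⁻¹ * p.1 i - p.2.1 i = 0 := by
          rcases mul_eq_zero.1 t1z with h | h
          · exact absurd h (hkVne i)
          · exact sq_eq_zero_iff.1 h
        rw [hω, mul_zero, zero_sub, neg_eq_zero] at hq
        exact ⟨hω, hq⟩
      have hedge : ∀ i j, 0 < cw i j → p.2.2 i = p.2.2 j := by
        intro i j hij
        have hi : ∀ i' ∈ Finset.univ, (∑ j', cw i' j' * (p.2.2 i' - p.2.2 j')^2) = 0 :=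
          (Finset.sum_eq_zero_iff_of_nonneg (fun i' _ => Finset.sum_nonneg fun j' _ =>
            mul_nonneg (hcw_nonneg i' j') (sq_nonneg _))).1 hQ3
        have hj : ∀ j' ∈ Finset.univ, cw i j' * (p.2.2 i - p.2.2 j')^2 = 0 :=
          (Finset.sum_eq_zero_iff_of_nonneg (fun j' _ =>
            mul_nonneg (hcw_nonneg i j') (sq_nonneg _))).1 (hi i (Finset.mem_univ i))
        rcases mul_eq_zero.1 (hj j (Finset.mem_univ j)) with h | h
        · exact absurd h hij.ne'
        · have := sq_eq_zero_iff.1 h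
          linarith [sub_eq_zero.1 this]
      have hconst : ∀ i j : Fin n, p.2.2 i = p.2.2 j := by
        intro i j
        induction hcconn i j with
        | refl => rfl
        | tail _ hbc ih => exact ih.trans (hedge _ _ hbc)
      exact ⟨funext fun i => (hzeros i).1, funext fun i => (hzeros i).2,
        ⟨p.2.2 ⟨0, hn⟩, funext fun i => hconst i ⟨0, hn⟩⟩⟩
    · rintro ⟨hω, hV, k, hη⟩
      rw [neg_eq_zero, hQ p, hω, hV, hη]
      simp
end
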